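/- Let N be divisible by 6, let w be metric weights on a finite set 𝒩 of N points, and let M* be a maximum-weight perfect matching of 𝒩. Let M_0 be any matching of N/3 edges with w(M_0) ≥ (1/2)·w(M*) (for instance, a greedy N/3-matching), let Top be the set of 2N/3 points covered by M_0, and let B = 𝒩 ∖ Top be the N/3 uncovered points. Then (3/4)·w(M_0) + (3/(2N))·Σ_{ {x,y} ⊆ B } w(x,y) + (3/(4N))·Σ_{ x ∈ Top, y ∈ B } w(x,y) ≥ (5/8)·w(M*). (This quantity equals the expected weight of the matching output by the randomized algorithm that returns, each with probability 1/2, either M_0 completed by a uniformly random perfect matching on B, or a uniformly random half of M_0 completed by a random bipartite matching to B; hence that ordinal algorithm is a 1.6-approximation for Maximum Weighted Matching.) -/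

import Mathlib

/-- A matching given as a list of `k` edges: each edge has distinct endpoints and
different edges are vertex-disjoint. -/
def IsMatching {V : Type*} {k : ℕ} (f : Fin k → V × V) : Prop :=
  (∀ i, (f i).1 ≠ (f i).2) ∧
  ∀ i j, i ≠ j →
    (f i).1 ≠ (f j).1 ∧ (f i).1 ≠ (f j).2 ∧ (f i).2 ≠ (f j).1 ∧ (f i).2 ≠ (f j).2

/-- The weight of a matching: the sum of the weights of its edges. -/
def mWeight {V : Type*} {k : ℕ} (w : V → V → ℝ) (f : Fin k → V × V) : ℝ :=
  ∑ i, w (f i).1 (f i).2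

/-- `N = 6m`, metric weights `w`, `σ*` a maximum-weight perfect matching
(fixed-point-free involution), `f` a matching of `N/3 = 2m` edges with
`w(M₀) ≥ (1/2)·w(M*)`, `Top` the set of covered points and `B = Topᶜ`.  Then
`(3/4)·w(M₀) + (3/(2N))·Σ_{{x,y}⊆B} w + (3/(4N))·Σ_{x∈Top,y∈B} w ≥ (5/8)·w(M*)`. -/
theorem stmt_12 (m N : ℕ) (hN : N = 6 * m)
    (w : Fin N → Fin N → ℝ)
    (hnonneg : ∀ x y, 0 ≤ w x y)
    (hsymm : ∀ x y, w x y = w y x)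
    (hmetric : ∀ x y z : Fin N, x ≠ y → y ≠ z → x ≠ z → w x y ≤ w x z + w z y)
    (σstar : Equiv.Perm (Fin N))
    (hinv : ∀ x, σstar (σstar x) = x) (hfix : ∀ x, σstar x ≠ x)
    (hmax : ∀ σ : Equiv.Perm (Fin N), (∀ x, σ (σ x) = x) → (∀ x, σ x ≠ x) →
      (∑ x, w x (σ x)) / 2 ≤ (∑ x, w x (σstar x)) / 2)
    (f : Fin (2 * m) → Fin N × Fin N) (hf : IsMatching f)
    (hhalf : (1 / 2) * ((∑ x, w x (σstar x)) / 2) ≤ mWeight w f) :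
    (3 / 4) * mWeight w f
      + (3 / (2 * (N : ℝ))) *
          ((∑ p ∈ ((Finset.univ.filter
              (fun v : Fin N => ∃ i, v = (f i).1 ∨ v = (f i).2))ᶜ).offDiag,
            w p.1 p.2) / 2)
      + (3 / (4 * (N : ℝ))) *
          (∑ x ∈ Finset.univ.filter (fun v : Fin N => ∃ i, v = (f i).1 ∨ v = (f i).2),
            ∑ y ∈ (Finset.univ.filter
              (fun v : Fin N => ∃ i, v = (f i).1 ∨ v = (f i).2))ᶜ,
              w x y)
      ≥ (5 / 8) * ((∑ x, w x (σstar x)) / 2) := by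
  classical
  subst hN
  set Top : Finset (Fin (6 * m)) :=
    Finset.univ.filter (fun v : Fin (6 * m) => ∃ i, v = (f i).1 ∨ v = (f i).2) with hTopdef
  set B : Finset (Fin (6 * m)) := Topᶜ with hBdef
  set T : ℝ := ∑ x, w x (σstar x) with hTdef
  set D : ℝ := ∑ p ∈ B.offDiag, w p.1 p.2 with hDdef
  set S : ℝ := ∑ x ∈ Top, ∑ y ∈ B, w x y with hSdef
  rcases Nat.eq_zero_or_pos m with hm | hm
  · subst hm
    have hB : B = ∅ := by
      ext v
      exact absurd v.isLt (by omega)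
    have hT0 : T = 0 := by simp [hTdef]
    have hM0 : mWeight w f = 0 := by simp [mWeight]
    rw [hT0, hM0]
    have hD0 : D = 0 := by simp [hDdef, hB]
    have hS0 : S = 0 := by simp [hSdef, hB]
    rw [hD0, hS0]
    norm_num
  -- cardinality of Top
  have gInj : Function.Injective
      (Sum.elim (fun i : Fin (2 * m) => (f i).1) (fun i : Fin (2 * m) => (f i).2)) := by
    rintro (i | i) (j | j) h <;> simp only [Sum.elim_inl, Sum.elim_inr] at h
    · by_cases hij : i = j
      · exact congrArg _ hij
      · exact absurd h (hf.2 i j hij).1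
    · by_cases hij : i = j
      · exact absurd (hij ▸ h) (hf.1 j)
      · exact absurd h (hf.2 i j hij).2.1
    · by_cases hij : i = j
      · exact absurd (hij ▸ h).symm (hf.1 j)
      · exact absurd h (hf.2 i j hij).2.2.1
    · by_cases hij : i = j
      · exact congrArg _ hij
      · exact absurd h (hf.2 i j hij).2.2.2
  have hTopimg : Top = Finset.univ.image
      (Sum.elim (fun i : Fin (2 * m) => (f i).1) (fun i : Fin (2 * m) => (f i).2)) := by
    ext v
    simp only [hTopdef, Finset.mem_filter, Finset.mem_univ, true_and, Finset.mem_image]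
    constructor
    · rintro ⟨i, h | h⟩
      · exact ⟨Sum.inl i, h.symm⟩
      · exact ⟨Sum.inr i, h.symm⟩
    · rintro ⟨(i | i), rfl⟩
      · exact ⟨i, Or.inl rfl⟩
      · exact ⟨i, Or.inr rfl⟩
  have hcardTop : Top.card = 4 * m := by
    rw [hTopimg, Finset.card_image_of_injective _ gInj]
    simp
    ring
  have hcardB : B.card = 2 * m := by
    rw [hBdef, Finset.card_compl, hcardTop]
    simp
    omega
  -- the key triangle-inequality bound, per point x
  have key : ∀ x : Fin (6 * m), (2 * m : ℝ) * w x (σstar x) ≤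
      (∑ z ∈ B.erase x, w x z) + (∑ z ∈ B.erase (σstar x), w (σstar x) z) := by
    intro x
    set y := σstar x with hy
    have hxy : x ≠ y := by rw [hy]; exact Ne.symm (hfix x)
    have step : ∀ z ∈ B, w x y ≤
        (if z = x then 0 else w x z) + (if z = y then 0 else w y z) := by
      intro z _
      by_cases hzx : z = x
      · subst hzx
        rw [if_pos rfl, if_neg hxy]
        rw [hsymm]
        simp
      · by_cases hzy : z = y
        · subst hzy
          rw [if_neg hzx, if_pos rfl]
          simp
        · rw [if_neg hzx, if_neg hzy]
          have := hmetric x y z hxy (Ne.symm hzy) (Ne.symm hzx)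
          rw [hsymm z y] at this
          exact this
    calc (2 * m : ℝ) * w x y = ∑ _z ∈ B, w x y := by
            rw [Finset.sum_const, hcardB]; push_cast; ring
      _ ≤ ∑ z ∈ B, ((if z = x then 0 else w x z) + (if z = y then 0 else w y z)) :=
            Finset.sum_le_sum step
      _ = (∑ z ∈ B, if z = x then 0 else w x z) + (∑ z ∈ B, if z = y then 0 else w y z) :=
            Finset.sum_add_distrib
      _ = (∑ z ∈ B.erase x, w x z) + (∑ z ∈ B.erase y, w y z) := by
            congr 1
            · rw [← Finset.sum_erase B (by simp : (if x = x then (0:ℝ) else w x x) = 0)]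
              exact Finset.sum_congr rfl fun z hz => if_neg (Finset.ne_of_mem_erase hz)
            · rw [← Finset.sum_erase B (by simp : (if y = y then (0:ℝ) else w y y) = 0)]
              exact Finset.sum_congr rfl fun z hz => if_neg (Finset.ne_of_mem_erase hz)
  -- sum the key bound over all x
  set Q : ℝ := ∑ x, ∑ z ∈ B.erase x, w x z with hQdef
  have hsumkey : (2 * m : ℝ) * T ≤ 2 * Q := by
    have h1 : ∑ x : Fin (6 * m), (2 * m : ℝ) * w x (σstar x) = (2 * m : ℝ) * T := by
      rw [hTdef, Finset.mul_sum]
    have h2 : ∑ x : Fin (6 * m), ((∑ z ∈ B.erase x, w x z)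
        + (∑ z ∈ B.erase (σstar x), w (σstar x) z)) = 2 * Q := by
      rw [Finset.sum_add_distrib]
      have := Equiv.sum_comp σstar (fun x => ∑ z ∈ B.erase x, w x z)
      rw [this]
      ring
    calc (2 * m : ℝ) * T = ∑ x : Fin (6 * m), (2 * m : ℝ) * w x (σstar x) := h1.symm
      _ ≤ _ := Finset.sum_le_sum (fun x _ => key x)
      _ = 2 * Q := h2
  -- Q = S + D
  have hDalt : D = ∑ x ∈ B, ∑ z ∈ B.erase x, w x z := by
    have hoff : B.offDiag = (B ×ˢ B).filter (fun a => a.1 ≠ a.2) := by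
      ext p; simp [Finset.mem_offDiag, and_assoc]
    rw [hDdef, hoff, Finset.sum_filter, Finset.sum_product]
    refine Finset.sum_congr rfl fun x _ => ?_
    rw [← Finset.sum_erase B (by simp : (if (x:Fin (6*m)) ≠ x then w x x else 0) = 0)]
    exact Finset.sum_congr rfl fun z hz => if_pos (Finset.ne_of_mem_erase hz).symm
  have hQ : Q = S + D := by
    rw [hQdef, ← Finset.sum_add_sum_compl Top (fun x => ∑ z ∈ B.erase x, w x z), ← hBdef,
      hDalt, hSdef]
    congr 1
    refine Finset.sum_congr rfl fun x hx => ?_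
    have hxB : x ∉ B := by
      rw [hBdef, Finset.mem_compl]
      exact fun h => h hx
    rw [Finset.erase_eq_of_notMem hxB]
  -- final arithmetic
  have hmain : (m : ℝ) * T ≤ S + D := by nlinarith [hsumkey, hQ]
  have hW0 : T / 4 ≤ mWeight w f := by linarith [hhalf]
  have hmpos : (0 : ℝ) < m := by exact_mod_cast hm
  have hNval : ((6 * m : ℕ) : ℝ) = 6 * (m : ℝ) := by push_cast; ring
  rw [ge_iff_le, hNval]
  have hcoef : (3 / (2 * (6 * (m:ℝ)))) * (D / 2) + (3 / (4 * (6 * (m:ℝ)))) * S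
      = (S + D) / (8 * (m:ℝ)) := by
    field_simp
    ring
  have hfrac : T / 8 ≤ (S + D) / (8 * (m:ℝ)) := by
    rw [div_le_div_iff₀ (by norm_num) (by positivity)]
    nlinarith [hmain]
  linarith [hfrac, hW0]
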